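/- (Lemma 5, run-length form) Let S be a nonempty string over Σ, let P = {p ∈ [1,n] : S is a prefix of suffix(p)} be nonempty, and suppose there is a symbol s ∈ Σ such that T[p−1] = s for every p ∈ P (under the convention T[0] = T[n] = $). Then there exists an integer r such that {rank(p) : p ∈ P} = {r, r+1, …, r+|P|−1}, and BWT[k] = s for every k with r ≤ k ≤ r+|P|−1. That is, the BWT entries at the ranks of the suffixes prefixed by S form a single equal-symbol run (s, |P|), regardless of the internal order of those suffixes. -/

import Mathlib

/-- Auxiliary S-type classification with explicit fuel `n - i`. -/
def STypeAux {α : Type*} [LinearOrder α] (T : ℕ → α) : ℕ → ℕ → Prop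
  | 0, _ => True
  | k + 1, i => T i < T (i + 1) ∨ (T i = T (i + 1) ∧ STypeAux T k (i + 1))

/-- Position `i` of `T[1..n]` is S-type. -/
def SType {α : Type*} [LinearOrder α] (T : ℕ → α) (n i : ℕ) : Prop :=
  STypeAux T (n - i) i

/-- Auxiliary L-type classification with explicit fuel `n - i`. -/
def LTypeAux {α : Type*} [LinearOrder α] (T : ℕ → α) : ℕ → ℕ → Prop
  | 0, _ => False
  | k + 1, i => T (i + 1) < T i ∨ (T i = T (i + 1) ∧ LTypeAux T k (i + 1))

/-- Position `i` of `T[1..n]` is L-type. -/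
def LType {α : Type*} [LinearOrder α] (T : ℕ → α) (n i : ℕ) : Prop :=
  LTypeAux T (n - i) i

/-- Position `i` of `T[1..n]` is LMS-type. -/
def LMSType {α : Type*} [LinearOrder α] (T : ℕ → α) (n i : ℕ) : Prop :=
  1 < i ∧ SType T n i ∧ LType T n (i - 1)

/-- `suf T n i` is the suffix `T[i..n]` of `T[1..n]` as a list. -/
def suf {α : Type*} (T : ℕ → α) (n i : ℕ) : List α :=
  (List.range (n + 1 - i)).map fun k => T (i + k)

/-- rank of suffix p among all suffixes of T[1..n]. -/
noncomputable def rnk {α : Type*} [LinearOrder α] (T : ℕ → α) (n p : ℕ) : ℕ :=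
  1 + Set.ncard {q : ℕ | 1 ≤ q ∧ q ≤ n ∧ List.Lex (· < ·) (suf T n q) (suf T n p)}

/-- `p` is an LMS-suffix occurrence of string `S` (|S| ≥ 2) in `T[1..n]`. -/
def IsLMSSuffixOcc {α : Type*} [LinearOrder α] (T : ℕ → α) (n : ℕ) (S : List α) (p : ℕ) : Prop :=
  1 ≤ p ∧ p + S.length - 1 ≤ n ∧
    ((List.range S.length).map fun k => T (p + k)) = S ∧
    LMSType T n (p + S.length - 1) ∧
    ∀ k, p < k → k < p + S.length - 1 → ¬ LMSType T n k


/-- If `S` is a prefix of `A` and `C` but not of `B`, then `B ≺ A` implies `B ≺ C`. -/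
theorem lex_congr {α : Type*} [LinearOrder α] :
    ∀ (S B A C : List α), S <+: A → S <+: C → ¬ S <+: B →
      List.Lex (· < ·) B A → List.Lex (· < ·) B C
  | [], _, _, _, _, _, hB, _ => absurd (List.nil_prefix) hB
  | s₀ :: S', B, A, C, hA, hC, hB, hBA => by
    obtain ⟨A', rfl, hA'⟩ : ∃ A', A = s₀ :: A' ∧ S' <+: A' := by
      obtain ⟨t, rfl⟩ := hA; exact ⟨S' ++ t, rfl, ⟨t, rfl⟩⟩
    obtain ⟨C', rfl, hC'⟩ : ∃ C', C = s₀ :: C' ∧ S' <+: C' := by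
      obtain ⟨t, rfl⟩ := hC; exact ⟨S' ++ t, rfl, ⟨t, rfl⟩⟩
    cases B with
    | nil => exact List.Lex.nil
    | cons b B' =>
      cases hBA with
      | rel h => exact List.Lex.rel h
      | cons h =>
        have hB' : ¬ S' <+: B' := fun hp => hB (by simp [List.cons_prefix_cons, hp])
        exact List.Lex.cons (lex_congr S' B' A' C' hA' hC' hB' h)

/-- The rank map of a finite set in a linear order has image `range card`. -/
theorem rank_image {β : Type*} [LinearOrder β] [DecidableEq β] (Q : Finset β) :
    (Q.image fun x => (Q.filter (· < x)).card) = Finset.range Q.card := by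
  classical
  induction Q using Finset.strongInduction with
  | _ Q ih =>
    rcases Q.eq_empty_or_nonempty with rfl | hne
    · simp
    · have hm := Q.max'_mem hne
      set m := Q.max' hne with hmdef
      have h1 : Q.filter (· < m) = Q.erase m := by
        ext x
        simp only [Finset.mem_filter, Finset.mem_erase]
        constructor
        · rintro ⟨hx, hlt⟩; exact ⟨ne_of_lt hlt, hx⟩
        · rintro ⟨hne', hx⟩; exact ⟨hx, lt_of_le_of_ne (Q.le_max' x hx) hne'⟩
      have h2 : ∀ x ∈ Q.erase m, Q.filter (· < x) = (Q.erase m).filter (· < x) := by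
        intro x hx
        ext y
        simp only [Finset.mem_filter, Finset.mem_erase]
        constructor
        · rintro ⟨hy, hlt⟩
          refine ⟨⟨?_, hy⟩, hlt⟩
          rintro rfl
          exact absurd (Q.le_max' x (Finset.mem_of_mem_erase hx)) (not_le_of_gt hlt)
        · rintro ⟨⟨_, hy⟩, hlt⟩; exact ⟨hy, hlt⟩
      have hQ : Q = insert m (Q.erase m) := (Finset.insert_erase hm).symm
      have hcard : (Q.erase m).card = Q.card - 1 := Finset.card_erase_of_mem hm
      have hsub : Q.erase m ⊂ Q := Finset.erase_ssubset hm
      have hih := ih (Q.erase m) hsub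
      have hpos : 1 ≤ Q.card := Finset.card_pos.mpr hne
      calc (Q.image fun x => (Q.filter (· < x)).card)
          = ((insert m (Q.erase m)).image fun x => (Q.filter (· < x)).card) := by rw [← hQ]
        _ = insert ((Q.filter (· < m)).card)
              ((Q.erase m).image fun x => (Q.filter (· < x)).card) :=
            Finset.image_insert _ _ _
        _ = insert (Q.card - 1) ((Q.erase m).image fun x => ((Q.erase m).filter (· < x)).card) := by
            rw [h1, hcard]
            congr 1
            apply Finset.image_congr
            intro x hx
            have hx' : x ∈ Q.erase m := hx
            dsimp only
            rw [h2 x hx']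
        _ = insert (Q.card - 1) (Finset.range ((Q.erase m).card)) := by rw [hih]
        _ = Finset.range Q.card := by
            rw [hcard, ← Finset.range_add_one]
            congr 1
            omega

theorem suf_len {α : Type*} (T : ℕ → α) (n p : ℕ) : (suf T n p).length = n + 1 - p := by
  simp [suf]

theorem suf_injOn {α : Type*} (T : ℕ → α) (n : ℕ) {p q : ℕ}
    (hp1 : 1 ≤ p) (hpn : p ≤ n) (hq1 : 1 ≤ q) (hqn : q ≤ n)
    (h : suf T n p = suf T n q) : p = q := by
  have := congrArg List.length h
  rw [suf_len, suf_len] at this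
  omega

theorem lex_irrefl {α : Type*} [LinearOrder α] (l : List α) : ¬ List.Lex (· < ·) l l :=
  fun h => (List.Lex.asymm (· < ·)).asymm _ _ h h

/-- Lemma 5, run-length form: if every occurrence of a nonempty
string `S` as a prefix of a suffix of `T` is preceded by the same symbol `s`,
then the ranks of those suffixes form a consecutive interval on which the BWT is
a single equal-symbol run of `s` of length `|P|`. -/
theorem stmt14 {α : Type*} [LinearOrder α] (T : ℕ → α) (n : ℕ) (sent : α)
    (hn : 2 ≤ n) (hTn : T n = sent) (hT0 : T 0 = sent)
    (hsent : ∀ a : α, a ≠ sent → sent < a)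
    (hT : ∀ i, 1 ≤ i → i < n → T i ≠ sent)
    -- the suffix array is the inverse of rank, and BWT k = T (SA k - 1):
    (SA : ℕ → ℕ) (hSA : ∀ p, 1 ≤ p → p ≤ n → SA (rnk T n p) = p)
    (bwt : ℕ → α) (hbwt : ∀ k, 1 ≤ k → k ≤ n → bwt k = T (SA k - 1))
    (S : List α) (hS : S ≠ []) (s : α)
    (hP : ∃ p, 1 ≤ p ∧ p ≤ n ∧ S <+: suf T n p)
    (hs : ∀ p, 1 ≤ p → p ≤ n → S <+: suf T n p → T (p - 1) = s) :
    ∃ r : ℕ,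
      rnk T n '' {p : ℕ | 1 ≤ p ∧ p ≤ n ∧ S <+: suf T n p} =
        Set.Icc r (r + {p : ℕ | 1 ≤ p ∧ p ≤ n ∧ S <+: suf T n p}.ncard - 1) ∧
      ∀ k, r ≤ k → k ≤ r + {p : ℕ | 1 ≤ p ∧ p ≤ n ∧ S <+: suf T n p}.ncard - 1 →
        bwt k = s := by
  classical
  obtain ⟨p₀, hp₀1, hp₀n, hp₀S⟩ := hP
  set Pf : Finset ℕ := (Finset.Icc 1 n).filter (fun p => S <+: suf T n p) with hPfdef
  have hmemPf : ∀ p, p ∈ Pf ↔ 1 ≤ p ∧ p ≤ n ∧ S <+: suf T n p := by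
    intro p; simp [hPfdef, Finset.mem_Icc, and_assoc]
  have hPset : {p : ℕ | 1 ≤ p ∧ p ≤ n ∧ S <+: suf T n p} = ↑Pf := by
    ext p; simpa using (hmemPf p).symm
  have hp₀ : p₀ ∈ Pf := (hmemPf p₀).mpr ⟨hp₀1, hp₀n, hp₀S⟩
  set B : Finset ℕ := (Finset.Icc 1 n).filter
      (fun q => ¬ S <+: suf T n q ∧ List.Lex (· < ·) (suf T n q) (suf T n p₀)) with hBdef
  set r : ℕ := 1 + B.card with hrdef
  set m : ℕ := Pf.card with hmdef
  have hm1 : 1 ≤ m := Finset.card_pos.mpr ⟨p₀, hp₀⟩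
  have hncard : {p : ℕ | 1 ≤ p ∧ p ≤ n ∧ S <+: suf T n p}.ncard = m := by
    rw [hPset, Set.ncard_coe_finset]
  -- rnk as a finset cardinality
  set Qf : ℕ → Finset ℕ := fun p =>
    (Finset.Icc 1 n).filter (fun q => List.Lex (· < ·) (suf T n q) (suf T n p)) with hQfdef
  have hrnk : ∀ p, rnk T n p = 1 + (Qf p).card := by
    intro p
    have : {q : ℕ | 1 ≤ q ∧ q ≤ n ∧ List.Lex (· < ·) (suf T n q) (suf T n p)} = ↑(Qf p) := by
      ext q; simp [hQfdef, Finset.mem_Icc, and_assoc]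
    rw [rnk, this, Set.ncard_coe_finset]
  set cnt : ℕ → ℕ := fun p =>
    (Pf.filter (fun q => List.Lex (· < ·) (suf T n q) (suf T n p))).card with hcntdef
  -- decomposition of Qf p for p ∈ Pf
  have hdecomp : ∀ p ∈ Pf, rnk T n p = r + cnt p := by
    intro p hp
    obtain ⟨hp1, hpn, hpS⟩ := (hmemPf p).mp hp
    have hunion : Qf p = B ∪ Pf.filter (fun q => List.Lex (· < ·) (suf T n q) (suf T n p)) := by
      ext q
      simp only [hQfdef, hBdef, hPfdef, Finset.mem_union, Finset.mem_filter, Finset.mem_Icc]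
      constructor
      · rintro ⟨hq, hlex⟩
        by_cases hqS : S <+: suf T n q
        · exact Or.inr ⟨⟨hq, hqS⟩, hlex⟩
        · exact Or.inl ⟨hq, hqS, lex_congr S (suf T n q) (suf T n p) (suf T n p₀) hpS hp₀S hqS hlex⟩
      · rintro (⟨hq, hqS, hlex⟩ | ⟨⟨hq, _⟩, hlex⟩)
        · exact ⟨hq, lex_congr S (suf T n q) (suf T n p₀) (suf T n p) hp₀S hpS hqS hlex⟩
        · exact ⟨hq, hlex⟩
    have hdisj : Disjoint B (Pf.filter (fun q => List.Lex (· < ·) (suf T n q) (suf T n p))) := by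
      rw [Finset.disjoint_left]
      intro q hqB hqP
      simp only [hBdef, Finset.mem_filter] at hqB
      simp only [Finset.mem_filter] at hqP
      exact hqB.2.1 ((hmemPf q).mp hqP.1).2.2
    have hc : cnt p = (Pf.filter (fun q => List.Lex (· < ·) (suf T n q) (suf T n p))).card := rfl
    rw [hrnk, hunion, Finset.card_union_of_disjoint hdisj, hc, hrdef]
    omega
  -- the image of cnt over Pf is range m
  have hinj : Set.InjOn (suf T n) ↑Pf := by
    intro p hp q hq h
    obtain ⟨hp1, hpn, -⟩ := (hmemPf p).mp hp
    obtain ⟨hq1, hqn, -⟩ := (hmemPf q).mp hq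
    exact suf_injOn T n hp1 hpn hq1 hqn h
  set Qs : Finset (List α) := Pf.image (suf T n) with hQsdef
  have hQscard : Qs.card = m := Finset.card_image_of_injOn hinj
  have hcnt_eq : ∀ p ∈ Pf, cnt p = (Qs.filter (· < suf T n p)).card := by
    intro p hp
    rw [hcntdef]
    have : Qs.filter (· < suf T n p)
        = (Pf.filter (fun q => List.Lex (· < ·) (suf T n q) (suf T n p))).image (suf T n) := by
      rw [hQsdef, Finset.filter_image]
      congr 1
      ext q
      simp only [Finset.mem_filter]
      exact Iff.rfl
    rw [this]
    exact (Finset.card_image_of_injOn (hinj.mono (by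
      intro q hq
      exact (Finset.filter_subset _ _) hq))).symm
  have himage_cnt : Pf.image cnt = Finset.range m := by
    have h1 : Pf.image cnt = Qs.image (fun y => (Qs.filter (· < y)).card) := by
      rw [hQsdef, Finset.image_image]
      apply Finset.image_congr
      intro p hp
      exact hcnt_eq p hp
    rw [h1, ← hQscard, ← rank_image Qs]
    refine Finset.image_congr fun y _ => ?_
    congr 1
    ext x
    simp only [Finset.mem_filter]
  have himage : Pf.image (rnk T n) = (Finset.range m).image (fun c => r + c) := by
    have h1 : Pf.image (rnk T n) = Pf.image (fun p => r + cnt p) :=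
      Finset.image_congr (fun p hp => hdecomp p hp)
    rw [h1, ← himage_cnt, Finset.image_image]
    rfl
  -- final interval description
  have hIcc : rnk T n '' {p : ℕ | 1 ≤ p ∧ p ≤ n ∧ S <+: suf T n p} = Set.Icc r (r + m - 1) := by
    rw [hPset, ← Finset.coe_image, himage]
    ext k
    simp only [Finset.coe_image, Finset.coe_range, Set.mem_image, Set.mem_Iio, Set.mem_Icc]
    constructor
    · rintro ⟨c, hc, rfl⟩; omega
    · rintro ⟨h1, h2⟩; exact ⟨k - r, by omega, by omega⟩
  refine ⟨r, by rw [hncard]; exact hIcc, ?_⟩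
  intro k hk1 hk2
  rw [hncard] at hk2
  have hkmem : k ∈ Set.Icc r (r + m - 1) := ⟨hk1, hk2⟩
  rw [← hIcc] at hkmem
  obtain ⟨p, hpmem, hpk⟩ := hkmem
  rw [hPset] at hpmem
  have hpmem' : p ∈ Pf := hpmem
  obtain ⟨hp1, hpn, hpS⟩ := (hmemPf p).mp hpmem'
  -- rnk p ≤ n
  have hQsub : Qf p ⊆ (Finset.Icc 1 n).erase p := by
    intro q hq
    simp only [hQfdef, Finset.mem_filter, Finset.mem_Icc] at hq
    rw [Finset.mem_erase]
    refine ⟨?_, by simp [Finset.mem_Icc]; omega⟩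
    rintro rfl
    exact lex_irrefl _ hq.2
  have hrnkle : rnk T n p ≤ n := by
    have h1 := Finset.card_le_card hQsub
    have h2 : ((Finset.Icc 1 n).erase p).card = n - 1 := by
      rw [Finset.card_erase_of_mem (by simp [Finset.mem_Icc]; omega), Nat.card_Icc]
      omega
    rw [hrnk]
    omega
  have hrnkge : 1 ≤ rnk T n p := by rw [hrnk]; omega
  have hk1' : 1 ≤ k := by omega
  have hkn : k ≤ n := by rw [← hpk]; exact hrnkle
  rw [hbwt k hk1' hkn, ← hpk, hSA p hp1 hpn]
  exact hs p hp1 hpn hpS
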